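/- (Asynchronous convergence.) Let d ≥ 1 and let M ∈ ℝ^{d×d} be symmetric positive definite with M_{hh} ≥ M_{hk} ≥ 0 for all h, k, and set D = max_h M_{hh}. Let θ ∈ ℝ with sin θ ≠ 0, U_N > 0, b ∈ ℝ, c, r ∈ ℝ^d fixed vectors, and let γ satisfy 0 < γ < U_N² / (sin²θ · d · D). Define v̂(q) = c + (2 sin θ / U_N²) M q. Let (h(t))_{t≥0} be a sequence of independent random variables, each uniformly distributed on the index set {1,…,d}, on some probability space. Define random sequences (q(t), λ(t)) by arbitrary deterministic initial conditions q(0) ∈ ℝ^d and λ(0) ≥ 0, and for each t: λ_{h(t)}(t+1) = [λ_{h(t)}(t) + γ (b − v̂_{h(t)}(q(t)))]₊ and q_{h(t)}(t+1) = sin θ · λ_{h(t)}(t+1) − r_{h(t)}, while λ_k(t+1) = λ_k(t) and q_k(t+1) = q_k(t) for all k ≠ h(t). If (q*, λ*) is a fixed point of the corresponding synchronous iteration λ⁺ = [λ + γ(b𝟙 − v̂(q))]₊, q⁺ = sin θ · λ⁺ − r, then (q(t), λ(t)) converges to (q*, λ*) almost surely as t → ∞. -/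

import Mathlib

open Matrix MeasureTheory ProbabilityTheory

section DetAux

open Filter


lemma proj_step_ineq {x gv γ : ℝ} (hx : 0 ≤ x) (hγ : 0 < γ) :
    gv * (max (x - γ * gv) 0 - x) ≤ -((max (x - γ * gv) 0 - x) ^ 2) / γ := by
  rcases le_or_gt 0 (x - γ * gv) with h1 | h1
  · rw [max_eq_left h1, le_div_iff₀ hγ]
    nlinarith [sq_nonneg gv]
  · rw [max_eq_right h1.le, le_div_iff₀ hγ]
    have hgv : x < γ * gv := by linarith
    have h2 : x * x ≤ γ * gv * x := mul_le_mul_of_nonneg_right hgv.le hx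
    nlinarith

lemma dot_sym {d : ℕ} {M : Matrix (Fin d) (Fin d) ℝ} (hsym : ∀ i j, M i j = M j i)
    (u v : Fin d → ℝ) : u ⬝ᵥ M *ᵥ v = v ⬝ᵥ M *ᵥ u := by
  simp only [dotProduct, Matrix.mulVec, Finset.mul_sum]
  rw [Finset.sum_comm]
  refine Finset.sum_congr rfl fun i _ => Finset.sum_congr rfl fun j _ => ?_
  rw [hsym j i]
  ring

lemma quad_expand {d : ℕ} (M : Matrix (Fin d) (Fin d) ℝ)
    (hsym : ∀ u v : Fin d → ℝ, u ⬝ᵥ M *ᵥ v = v ⬝ᵥ M *ᵥ u) (a : ℝ) (β x y : Fin d → ℝ) :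
    (a / 2 * (y ⬝ᵥ M *ᵥ y) - β ⬝ᵥ y) - (a / 2 * (x ⬝ᵥ M *ᵥ x) - β ⬝ᵥ x)
      = (a • (M *ᵥ x) - β) ⬝ᵥ (y - x) + a / 2 * ((y - x) ⬝ᵥ M *ᵥ (y - x)) := by
  have h1 : (a • (M *ᵥ x) - β) ⬝ᵥ (y - x)
      = a * ((M *ᵥ x) ⬝ᵥ y) - a * ((M *ᵥ x) ⬝ᵥ x) - (β ⬝ᵥ y - β ⬝ᵥ x) := by
    rw [sub_dotProduct, smul_dotProduct, dotProduct_sub,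
      dotProduct_sub, smul_eq_mul]
    ring
  have h2 : (y - x) ⬝ᵥ M *ᵥ (y - x)
      = (y ⬝ᵥ M *ᵥ y) - (y ⬝ᵥ M *ᵥ x) - ((x ⬝ᵥ M *ᵥ y) - (x ⬝ᵥ M *ᵥ x)) := by
    rw [Matrix.mulVec_sub, sub_dotProduct, dotProduct_sub, dotProduct_sub]
  have h3 : (M *ᵥ x) ⬝ᵥ y = x ⬝ᵥ M *ᵥ y := by
    rw [dotProduct_comm, hsym y x]
  have h4 : (M *ᵥ x) ⬝ᵥ x = x ⬝ᵥ M *ᵥ x := dotProduct_comm _ _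
  rw [h1, h2, h3, h4, hsym x y]
  ring

lemma posdef_mu {d : ℕ} (hd : 1 ≤ d) (M : Matrix (Fin d) (Fin d) ℝ) (hpd : M.PosDef) :
    ∃ μ : ℝ, 0 < μ ∧ ∀ x : Fin d → ℝ, μ * ∑ k, x k ^ 2 ≤ x ⬝ᵥ M *ᵥ x := by
  classical
  have hpos : ∀ x : Fin d → ℝ, x ≠ 0 → 0 < x ⬝ᵥ M *ᵥ x := by
    intro x hx
    have := hpd.dotProduct_mulVec_pos hx
    simpa using this
  set φ : (Fin d → ℝ) → ℝ := fun x => x ⬝ᵥ M *ᵥ x with hφ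
  have hφcont : Continuous φ := by
    simp only [hφ, dotProduct, Matrix.mulVec]
    exact continuous_finset_sum _ fun k _ => (continuous_apply k).mul
      (continuous_finset_sum _ fun m _ => continuous_const.mul (continuous_apply m))
  have hscale : ∀ (t : ℝ) (v : Fin d → ℝ), φ (t • v) = t ^ 2 * φ v := by
    intro t v
    simp only [hφ, dotProduct, Matrix.mulVec, Pi.smul_apply, smul_eq_mul,
      Finset.mul_sum]
    refine Finset.sum_congr rfl fun k _ => Finset.sum_congr rfl fun m _ => ?_
    ring
  set S : Set (Fin d → ℝ) := {x | ∑ k, x k ^ 2 = 1} with hS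
  have hsumcont : Continuous fun x : Fin d → ℝ => ∑ k, x k ^ 2 :=
    continuous_finset_sum _ fun k _ => (continuous_apply k).pow 2
  have hSclosed : IsClosed S := isClosed_eq hsumcont continuous_const
  have hSsub : S ⊆ Metric.closedBall 0 1 := by
    intro x hx
    rw [Metric.mem_closedBall, dist_zero_right]
    rw [pi_norm_le_iff_of_nonneg zero_le_one]
    intro i
    rw [Real.norm_eq_abs, abs_le]
    have h1 : x i ^ 2 ≤ 1 := by
      have := Finset.single_le_sum (f := fun k => x k ^ 2) (fun k _ => sq_nonneg _)
        (Finset.mem_univ i)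
      rw [hx] at this; exact this
    constructor <;> nlinarith
  have hScompact : IsCompact S :=
    (Metric.isCompact_of_isClosed_isBounded hSclosed
      (Metric.isBounded_closedBall.subset hSsub))
  have hx0 : (Pi.single (⟨0, hd⟩ : Fin d) 1 : Fin d → ℝ) ∈ S := by
    simp only [hS, Set.mem_setOf_eq, Pi.single_apply, apply_ite (fun z : ℝ => z ^ 2)]
    simp
  obtain ⟨z, hzS, hzmin⟩ := hScompact.exists_isMinOn ⟨_, hx0⟩ hφcont.continuousOn
  have hznz : z ≠ 0 := by
    intro hz
    rw [hz, hS] at hzS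
    simp at hzS
  refine ⟨φ z, hpos z hznz, ?_⟩
  intro x
  rcases eq_or_ne x 0 with hx | hx
  · simp [hx, hφ]
  · have hs2pos : 0 < ∑ k, x k ^ 2 := by
      obtain ⟨k, hk⟩ := Function.ne_iff.1 hx
      exact Finset.sum_pos' (fun m _ => sq_nonneg _)
        ⟨k, Finset.mem_univ k, pow_two_pos_of_ne_zero hk⟩
    set s : ℝ := Real.sqrt (∑ k, x k ^ 2) with hsdef
    have hspos : 0 < s := Real.sqrt_pos.2 hs2pos
    have hssq : s ^ 2 = ∑ k, x k ^ 2 := Real.sq_sqrt hs2pos.le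
    set y : Fin d → ℝ := s⁻¹ • x with hy
    have hyS : y ∈ S := by
      simp only [hS, Set.mem_setOf_eq, hy, Pi.smul_apply, smul_eq_mul]
      have h5 : ∑ k, (s⁻¹ * x k) ^ 2 = s⁻¹ ^ 2 * ∑ k, x k ^ 2 := by
        rw [Finset.mul_sum]
        exact Finset.sum_congr rfl fun k _ => by ring
      rw [h5, ← hssq]
      field_simp
    have hxy : x = s • y := by
      rw [hy, smul_smul, mul_inv_cancel₀ hspos.ne', one_smul]
    have := hzmin hyS
    have h6 : φ x = s ^ 2 * φ y := by
      conv_lhs => rw [hxy]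
      rw [hscale]
    calc φ z * ∑ k, x k ^ 2 ≤ φ y * ∑ k, x k ^ 2 := by
          apply mul_le_mul_of_nonneg_right this hs2pos.le
      _ = φ x := by rw [h6, ← hssq]; ring


set_option maxHeartbeats 2000000 in
theorem det_conv (d : ℕ) (hd : 1 ≤ d)
    (M : Matrix (Fin d) (Fin d) ℝ) (hpd : M.PosDef)
    (hM : ∀ h k : Fin d, M h k ≤ M h h ∧ 0 ≤ M h k)
    (D : ℝ) (hD : IsGreatest (Set.range fun h => M h h) D)
    (θ UN b : ℝ) (hθ : Real.sin θ ≠ 0) (hUN : 0 < UN)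
    (c r : Fin d → ℝ)
    (γ : ℝ) (hγ : 0 < γ) (hγ2 : γ < UN ^ 2 / (Real.sin θ ^ 2 * d * D))
    (h : ℕ → Fin d) (q l : ℕ → Fin d → ℝ)
    (hl0nonneg : ∀ k, 0 ≤ l 0 k)
    (hlrec : ∀ t, l (t + 1) (h t) =
      max (l t (h t) + γ * (b - (c (h t) + 2 * Real.sin θ / UN ^ 2 * (M *ᵥ q t) (h t)))) 0)
    (hlrec' : ∀ t (k : Fin d), k ≠ h t → l (t + 1) k = l t k)
    (hqrec : ∀ t, q (t + 1) (h t) = Real.sin θ * l (t + 1) (h t) - r (h t))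
    (hqrec' : ∀ t (k : Fin d), k ≠ h t → q (t + 1) k = q t k)
    (hsweep : ∀ N, ∃ j ≥ N, ∀ i : Fin d, h (j * d + i.val) = i)
    (qs ls : Fin d → ℝ)
    (hfixl : ls = fun k => max (ls k + γ * (b - (c k + 2 * Real.sin θ / UN ^ 2 * (M *ᵥ qs) k))) 0)
    (hfixq : qs = Real.sin θ • ls - r) :
    Filter.Tendsto (fun t => (q t, l t)) Filter.atTop (nhds (qs, ls)) := by
  classical
  have hdpos : 0 < d := hd
  have hdR : (1 : ℝ) ≤ (d : ℝ) := by exact_mod_cast hd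
  have hs2 : 0 < Real.sin θ ^ 2 := pow_two_pos_of_ne_zero hθ
  have hUN2 : 0 < UN ^ 2 := by positivity
  obtain ⟨a, ha_def⟩ : ∃ a : ℝ, a = 2 * Real.sin θ ^ 2 / UN ^ 2 := ⟨_, rfl⟩
  have ha : 0 < a := by rw [ha_def]; positivity
  obtain ⟨β, hβ_def⟩ : ∃ β : Fin d → ℝ,
      β = fun k => b - c k + 2 * Real.sin θ / UN ^ 2 * (M *ᵥ r) k := ⟨_, rfl⟩
  obtain ⟨g, hg_def⟩ : ∃ g : (Fin d → ℝ) → Fin d → ℝ,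
      g = fun x k => a * (M *ᵥ x) k - β k := ⟨_, rfl⟩
  obtain ⟨f, hf_def⟩ : ∃ f : (Fin d → ℝ) → ℝ,
      f = fun x => a / 2 * (x ⬝ᵥ M *ᵥ x) - β ⬝ᵥ x := ⟨_, rfl⟩
  have hsym : ∀ i j, M i j = M j i := by
    intro i j
    have h1 := hpd.1
    have h2 := congrFun (congrFun h1 i) j
    have h3 : M j i = M i j := by simpa [Matrix.conjTranspose_apply] using h2
    exact h3.symm
  have hdsym : ∀ u v : Fin d → ℝ, u ⬝ᵥ M *ᵥ v = v ⬝ᵥ M *ᵥ u := dot_sym hsym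
  obtain ⟨μ, hμ, hμle⟩ := posdef_mu hd M hpd
  have haμ : 0 < a * μ := mul_pos ha hμ
  have hMD : ∀ k : Fin d, M k k ≤ D := fun k => hD.2 ⟨k, rfl⟩
  have hMkk : ∀ k : Fin d, μ ≤ M k k := by
    intro k
    have h1 := hμle (Pi.single k 1)
    have h2 : (Pi.single k 1 : Fin d → ℝ) ⬝ᵥ M *ᵥ Pi.single k 1 = M k k := by
      rw [Matrix.mulVec_single, single_dotProduct]
      simp
    have h3 : ∑ m, (Pi.single k 1 : Fin d → ℝ) m ^ 2 = 1 := by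
      simp only [Pi.single_apply, apply_ite (fun z : ℝ => z ^ 2)]
      simp
    rw [h2, h3, mul_one] at h1
    exact h1
  have hDpos : 0 < D := by
    obtain ⟨k0, hk0⟩ := hD.1
    simp only at hk0
    have := hMkk k0
    rw [hk0] at this
    linarith
  have hdR' : (0:ℝ) < (d:ℝ) := by exact_mod_cast hdpos
  have hγaD : γ * (a * D) < 2 / d := by
    have hden : 0 < Real.sin θ ^ 2 * d * D := mul_pos (mul_pos hs2 hdR') hDpos
    have h1 : γ * (Real.sin θ ^ 2 * d * D) < UN ^ 2 := (lt_div_iff₀ hden).1 hγ2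
    have h2 : a * UN ^ 2 = 2 * Real.sin θ ^ 2 := by rw [ha_def]; field_simp
    rw [lt_div_iff₀ hdR']
    have h3 : γ * (a * D) * d * UN ^ 2 < 2 * UN ^ 2 := by
      calc γ * (a * D) * d * UN ^ 2 = (a * UN ^ 2) * (γ * D * d) := by ring
        _ = 2 * Real.sin θ ^ 2 * (γ * D * d) := by rw [h2]
        _ = 2 * (γ * (Real.sin θ ^ 2 * d * D)) := by ring
        _ < 2 * UN ^ 2 := by linarith
    exact lt_of_mul_lt_mul_right h3 hUN2.le
  obtain ⟨κ, hκ_def⟩ : ∃ κ : ℝ, κ = 1 / γ - a * D / 2 := ⟨_, rfl⟩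
  have hκ : 0 < κ := by
    rw [hκ_def]
    have h1 : γ * (a * D) < 2 := lt_of_lt_of_le hγaD (by
      rw [div_le_iff₀ (by positivity : (0:ℝ) < (d:ℝ))]
      nlinarith)
    rw [sub_pos, div_lt_div_iff₀ (by norm_num) hγ]
    nlinarith
  have hmv : ∀ (x : Fin d → ℝ) (k : Fin d),
      (M *ᵥ fun m => Real.sin θ * x m - r m) k = Real.sin θ * (M *ᵥ x) k - (M *ᵥ r) k := by
    intro x k
    simp only [Matrix.mulVec, dotProduct]
    rw [Finset.mul_sum, ← Finset.sum_sub_distrib]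
    exact Finset.sum_congr rfl fun m _ => by ring
  have htrans : ∀ (x : Fin d → ℝ) (k : Fin d),
      b - (c k + 2 * Real.sin θ / UN ^ 2 * (M *ᵥ fun m => Real.sin θ * x m - r m) k)
        = -(g x k) := by
    intro x k
    rw [hmv, hg_def, hβ_def, ha_def]
    field_simp
    ring
  have hqs : qs = fun m => Real.sin θ * ls m - r m := by
    rw [hfixq]; funext m; simp [Pi.sub_apply, Pi.smul_apply, smul_eq_mul]
  have hfix2 : ∀ k, ls k = max (ls k - γ * g ls k) 0 := by
    intro k
    have h1 := congrFun hfixl k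
    rw [hqs, htrans ls k] at h1
    rw [show ls k + γ * -(g ls k) = ls k - γ * g ls k from by ring] at h1
    exact h1
  have hlsnn : ∀ k, 0 ≤ ls k := fun k => by rw [hfix2 k]; exact le_max_right _ _
  have hlnn : ∀ t k, 0 ≤ l t k := by
    intro t
    induction t with
    | zero => exact hl0nonneg
    | succ t ih =>
      intro k
      rcases eq_or_ne k (h t) with hk | hk
      · rw [hk, hlrec t]; exact le_max_right _ _
      · rw [hlrec' t k hk]; exact ih k
  have hqrel : ∀ t (k : Fin d), (∃ u, u < t ∧ h u = k) →
      q t k = Real.sin θ * l t k - r k := by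
    intro t
    induction t with
    | zero => rintro k ⟨u, hu, -⟩; omega
    | succ t ih =>
      rintro k ⟨u, hu, huk⟩
      rcases eq_or_ne k (h t) with hk | hk
      · rw [hk]; exact hqrec t
      · rw [hqrec' t k hk, hlrec' t k hk]
        refine ih k ⟨u, ?_, huk⟩
        rcases Nat.lt_succ_iff_lt_or_eq.1 hu with h1 | h1
        · exact h1
        · exfalso; apply hk; rw [← huk, h1]
  obtain ⟨j₀, -, hj₀⟩ := hsweep 0
  obtain ⟨T, hT_def⟩ : ∃ T : ℕ, T = j₀ * d + d := ⟨_, rfl⟩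
  have hqT : ∀ t, T ≤ t → q t = fun m => Real.sin θ * l t m - r m := by
    intro t ht
    funext m
    refine hqrel t m ⟨j₀ * d + m.val, ?_, hj₀ m⟩
    have := m.isLt
    omega
  have hstep : ∀ t, T ≤ t → l (t + 1) (h t) = max (l t (h t) - γ * g (l t) (h t)) 0 := by
    intro t ht
    rw [hlrec t, hqT t ht, htrans]
    congr 1
    ring
  obtain ⟨Δ, hΔ_def⟩ : ∃ Δ : ℕ → ℝ, Δ = fun t => l (t + 1) (h t) - l t (h t) := ⟨_, rfl⟩
  have hsingle : ∀ t, l (t + 1) - l t = Pi.single (h t) (Δ t) := by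
    intro t
    funext k
    rcases eq_or_ne k (h t) with hk | hk
    · subst hk
      rw [Pi.sub_apply, hΔ_def, Pi.single_eq_same]
    · rw [Pi.sub_apply, hlrec' t k hk, Pi.single_eq_of_ne hk, sub_self]
  have hfdiff : ∀ t, f (l (t + 1)) - f (l t)
      = g (l t) (h t) * Δ t + a / 2 * (Δ t * (M (h t) (h t) * Δ t)) := by
    intro t
    have h1 := quad_expand M hdsym a β (l t) (l (t + 1))
    rw [hf_def]
    simp only []
    rw [h1, hsingle t, dotProduct_single, Matrix.mulVec_single, single_dotProduct]
    simp only [Pi.sub_apply, Pi.smul_apply, smul_eq_mul, hg_def, op_smul_eq_mul, Matrix.col_apply]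
  have hdec : ∀ t, T ≤ t → f (l (t + 1)) ≤ f (l t) - κ * Δ t ^ 2 := by
    intro t ht
    have h1 := hfdiff t
    have hMht : M (h t) (h t) ≤ D := hMD _
    have hΔt : Δ t = max (l t (h t) - γ * g (l t) (h t)) 0 - l t (h t) := by
      rw [hΔ_def]; simp only []; rw [hstep t ht]
    have h2 := proj_step_ineq (x := l t (h t)) (gv := g (l t) (h t)) (hlnn t (h t)) hγ
    rw [← hΔt] at h2
    have h2' : g (l t) (h t) * Δ t ≤ -(1 / γ * Δ t ^ 2) := by
      rw [show -(1 / γ * Δ t ^ 2) = -(Δ t ^ 2) / γ from by ring]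
      exact h2
    have h4 : a / 2 * (Δ t * (M (h t) (h t) * Δ t)) ≤ a * D / 2 * Δ t ^ 2 := by
      nlinarith [mul_nonneg (mul_nonneg ha.le (sub_nonneg.2 hMht)) (sq_nonneg (Δ t))]
    rw [hκ_def]
    have h5 : (1 / γ - a * D / 2) * Δ t ^ 2 = 1 / γ * Δ t ^ 2 - a * D / 2 * Δ t ^ 2 := by ring
    linarith [h1, h2', h4]
  have hmono : ∀ s t, T ≤ s → s ≤ t → f (l t) ≤ f (l s) := by
    intro s t hTs hst
    induction t, hst using Nat.le_induction with
    | base => exact le_rfl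
    | succ n hn ih =>
      have h6 := hdec n (le_trans hTs hn)
      have h5 : 0 ≤ κ * Δ n ^ 2 := mul_nonneg hκ.le (sq_nonneg _)
      linarith
  have hVI : ∀ x : Fin d → ℝ, (∀ k, 0 ≤ x k) → ∀ k, 0 ≤ g ls k * (x k - ls k) := by
    intro x hx k
    rcases le_or_gt (ls k - γ * g ls k) 0 with hle | hlt
    · have hz : ls k = 0 := by rw [hfix2 k, max_eq_right hle]
      have hg0 : 0 ≤ g ls k := by
        rw [hz] at hle
        nlinarith
      rw [hz, sub_zero]
      exact mul_nonneg hg0 (hx k)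
    · have heq : ls k = ls k - γ * g ls k := by
        conv_lhs => rw [hfix2 k]
        exact max_eq_left hlt.le
      have hg0 : g ls k = 0 := by
        have : γ * g ls k = 0 := by linarith
        rcases mul_eq_zero.1 this with hc | hc
        · exact absurd hc hγ.ne'
        · exact hc
      rw [hg0, zero_mul]
  have hdot_g : ∀ x y : Fin d → ℝ,
      (a • (M *ᵥ x) - β) ⬝ᵥ (y - x) = ∑ k, g x k * (y k - x k) := by
    intro x y
    simp only [dotProduct, Pi.sub_apply, Pi.smul_apply, smul_eq_mul, hg_def]
  have hgrow : ∀ x : Fin d → ℝ, (∀ k, 0 ≤ x k) →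
      f ls + a * μ / 2 * ∑ k, (x k - ls k) ^ 2 ≤ f x := by
    intro x hx
    have h1 := quad_expand M hdsym a β ls x
    have h5 : f x - f ls = (a • (M *ᵥ ls) - β) ⬝ᵥ (x - ls)
        + a / 2 * ((x - ls) ⬝ᵥ M *ᵥ (x - ls)) := by rw [hf_def]; exact h1
    rw [hdot_g ls x] at h5
    have h3 : 0 ≤ ∑ k, g ls k * (x k - ls k) :=
      Finset.sum_nonneg fun k _ => hVI x hx k
    have h4 : μ * ∑ k, (x k - ls k) ^ 2 ≤ (x - ls) ⬝ᵥ M *ᵥ (x - ls) := by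
      have h6 := hμle (x - ls)
      simpa [Pi.sub_apply] using h6
    have h7 := mul_le_mul_of_nonneg_left h4 (by positivity : (0:ℝ) ≤ a / 2)
    have h8 : a / 2 * (μ * ∑ k, (x k - ls k) ^ 2)
        = a * μ / 2 * ∑ k, (x k - ls k) ^ 2 := by ring
    linarith
  have hfmin : ∀ t, f ls ≤ f (l t) := by
    intro t
    have h1 := hgrow (l t) (hlnn t)
    have h2 : 0 ≤ ∑ k, (l t k - ls k) ^ 2 := Finset.sum_nonneg fun k _ => sq_nonneg _
    have h3 : 0 ≤ a * μ / 2 * ∑ k, (l t k - ls k) ^ 2 := mul_nonneg (by positivity) h2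
    linarith
  have htel : ∀ n : ℕ, f (l (T + n)) + κ * ∑ u ∈ Finset.range n, Δ (T + u) ^ 2 ≤ f (l T) := by
    intro n
    induction n with
    | zero => simp
    | succ n ih =>
      have h1 := hdec (T + n) (Nat.le_add_right _ _)
      rw [Finset.sum_range_succ]
      have he : T + (n + 1) = T + n + 1 := by omega
      rw [he]
      have h2 : κ * (∑ u ∈ Finset.range n, Δ (T + u) ^ 2 + Δ (T + n) ^ 2)
          = κ * ∑ u ∈ Finset.range n, Δ (T + u) ^ 2 + κ * Δ (T + n) ^ 2 := by ring
      linarith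
  have hsummable : Summable fun u => Δ (T + u) ^ 2 := by
    apply summable_of_sum_range_le (c := (f (l T) - f ls) / κ) (fun n => sq_nonneg _)
    intro n
    rw [le_div_iff₀ hκ]
    have h1 := htel n
    have h2 := hfmin (T + n)
    have h3 : (∑ u ∈ Finset.range n, Δ (T + u) ^ 2) * κ
        = κ * ∑ u ∈ Finset.range n, Δ (T + u) ^ 2 := by ring
    linarith
  have hΔ0 : Tendsto (fun u => Δ (T + u) ^ 2) atTop (nhds 0) := hsummable.tendsto_atTop_zero
  have hΔsmall : ∀ δ : ℝ, 0 < δ → ∃ N, ∀ t, N ≤ t → |Δ t| ≤ δ := by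
    intro δ hδ
    have h1 : ∀ᶠ u in atTop, Δ (T + u) ^ 2 < δ ^ 2 :=
      hΔ0.eventually (gt_mem_nhds (by positivity))
    obtain ⟨N, hN⟩ := eventually_atTop.1 h1
    refine ⟨T + N, fun t ht => ?_⟩
    have h2 : Δ t ^ 2 < δ ^ 2 := by
      have h3 := hN (t - T) (by omega)
      rwa [show T + (t - T) = t from by omega] at h3
    have h4 : |Δ t| = Real.sqrt (Δ t ^ 2) := (Real.sqrt_sq_eq_abs _).symm
    rw [h4, show δ = Real.sqrt (δ ^ 2) from by rw [Real.sqrt_sq hδ.le]]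
    exact Real.sqrt_le_sqrt h2.le
  -- bound on iterates
  obtain ⟨B2, hB2_def⟩ : ∃ B2 : ℝ,
      B2 = (f (l T) + (∑ k, β k ^ 2) / (a * μ)) * (4 / (a * μ)) := ⟨_, rfl⟩
  have hcoer : ∀ x : Fin d → ℝ, a * μ / 4 * ∑ k, x k ^ 2 ≤ f x + (∑ k, β k ^ 2) / (a * μ) := by
    intro x
    have h1 := hμle x
    have h2 : β ⬝ᵥ x ≤ a * μ / 4 * ∑ k, x k ^ 2 + (∑ k, β k ^ 2) / (a * μ) := by
      have h3 : ∀ k : Fin d, β k * x k ≤ a * μ / 4 * x k ^ 2 + β k ^ 2 / (a * μ) := by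
        intro k
        have key : 0 ≤ (a * μ / 2 * x k - β k) ^ 2 := sq_nonneg _
        have hdm : β k ^ 2 / (a * μ) * (a * μ) = β k ^ 2 := div_mul_cancel₀ _ haμ.ne'
        have h9 : 0 ≤ (a * μ / 4 * x k ^ 2 + β k ^ 2 / (a * μ) - β k * x k) * (a * μ) := by
          have e : (a * μ / 4 * x k ^ 2 + β k ^ 2 / (a * μ) - β k * x k) * (a * μ)
              = (a * μ / 2 * x k - β k) ^ 2
                + (β k ^ 2 / (a * μ) * (a * μ) - β k ^ 2) := by ring
          rw [e, hdm]
          linarith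
        have h10 := (mul_nonneg_iff_of_pos_right haμ).1 h9
        linarith
      calc β ⬝ᵥ x = ∑ k, β k * x k := rfl
        _ ≤ ∑ k, (a * μ / 4 * x k ^ 2 + β k ^ 2 / (a * μ)) := Finset.sum_le_sum fun k _ => h3 k
        _ = a * μ / 4 * ∑ k, x k ^ 2 + (∑ k, β k ^ 2) / (a * μ) := by
            rw [Finset.sum_add_distrib, ← Finset.mul_sum, ← Finset.sum_div]
    rw [hf_def]
    simp only []
    have h7 := mul_le_mul_of_nonneg_left h1 (by positivity : (0:ℝ) ≤ a / 2)
    have h8 : a / 2 * (μ * ∑ k, x k ^ 2) = a * μ / 2 * ∑ k, x k ^ 2 := by ring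
    linarith
  have hbound : ∀ t, T ≤ t → ∀ k, l t k ^ 2 ≤ B2 := by
    intro t ht k
    have h1 := hcoer (l t)
    have h2 := hmono T t le_rfl ht
    have h3 : l t k ^ 2 ≤ ∑ m, l t m ^ 2 :=
      Finset.single_le_sum (f := fun m => l t m ^ 2) (fun m _ => sq_nonneg _) (Finset.mem_univ k)
    rw [hB2_def]
    have h5 : a * μ / 4 * (l t k ^ 2) ≤ f (l T) + (∑ m, β m ^ 2) / (a * μ) := by
      have h6 := mul_le_mul_of_nonneg_left h3 (le_of_lt (by positivity : (0:ℝ) < a * μ / 4))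
      linarith
    have h7 : a * μ / 4 * (4 / (a * μ)) = 1 := by field_simp
    calc l t k ^ 2 = (a * μ / 4 * (l t k ^ 2)) * (4 / (a * μ)) := by
          rw [show (a * μ / 4 * (l t k ^ 2)) * (4 / (a * μ))
              = (l t k ^ 2) * (a * μ / 4 * (4 / (a * μ))) from by ring, h7, mul_one]
      _ ≤ (f (l T) + (∑ m, β m ^ 2) / (a * μ)) * (4 / (a * μ)) :=
          mul_le_mul_of_nonneg_right h5 (by positivity)
  obtain ⟨Bm, hBm_def⟩ : ∃ Bm : ℝ, Bm = Real.sqrt B2 := ⟨_, rfl⟩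
  have habs : ∀ t, T ≤ t → ∀ k, |l t k| ≤ Bm := by
    intro t ht k
    rw [hBm_def, ← Real.sqrt_sq_eq_abs]
    exact Real.sqrt_le_sqrt (hbound t ht k)
  -- residual
  obtain ⟨R, hR_def⟩ : ∃ R : (Fin d → ℝ) → Fin d → ℝ,
      R = fun x k => max (x k - γ * g x k) 0 - x k := ⟨_, rfl⟩
  obtain ⟨Cls, hCls_def⟩ : ∃ Cls : ℝ, Cls = ∑ k, |ls k| := ⟨_, rfl⟩
  obtain ⟨Cβ, hCβ_def⟩ : ∃ Cβ : ℝ, Cβ = ∑ k, |β k| := ⟨_, rfl⟩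
  obtain ⟨G, hG_def⟩ : ∃ G : ℝ, G = a * d * D * Bm + Cβ := ⟨_, rfl⟩
  have hBm0 : 0 ≤ Bm := by rw [hBm_def]; exact Real.sqrt_nonneg _
  have hMVbd : ∀ x : Fin d → ℝ, (∀ k, |x k| ≤ Bm) → ∀ k, |(M *ᵥ x) k| ≤ d * D * Bm := by
    intro x hxk k
    calc |(M *ᵥ x) k| = |∑ m, M k m * x m| := rfl
      _ ≤ ∑ m, |M k m * x m| := Finset.abs_sum_le_sum_abs _ _
      _ ≤ ∑ m : Fin d, D * Bm := by
          refine Finset.sum_le_sum fun m _ => ?_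
          rw [abs_mul]
          refine mul_le_mul ?_ (hxk m) (abs_nonneg _) hDpos.le
          rw [abs_of_nonneg (hM k m).2]
          exact le_trans (hM k m).1 (hMD k)
      _ = d * D * Bm := by rw [Finset.sum_const, Finset.card_univ, Fintype.card_fin, nsmul_eq_mul]; ring
  have hgbd : ∀ x : Fin d → ℝ, (∀ k, |x k| ≤ Bm) → ∀ k, |g x k| ≤ G := by
    intro x hxk k
    have h1 := hMVbd x hxk k
    have h2 : |β k| ≤ Cβ := by
      rw [hCβ_def]
      exact Finset.single_le_sum (f := fun m => |β m|) (fun m _ => abs_nonneg _)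
        (Finset.mem_univ k)
    rw [hg_def, hG_def]
    calc |a * (M *ᵥ x) k - β k| ≤ |a * (M *ᵥ x) k| + |β k| := abs_sub _ _
      _ = a * |(M *ᵥ x) k| + |β k| := by rw [abs_mul, abs_of_pos ha]
      _ ≤ a * (d * D * Bm) + Cβ := by
          have := mul_le_mul_of_nonneg_left h1 ha.le
          linarith
      _ = a * d * D * Bm + Cβ := by ring
  obtain ⟨C2, hC2_def⟩ : ∃ C2 : ℝ, C2 = G + (Cls + Bm) / γ := ⟨_, rfl⟩
  have hC2nn : 0 ≤ C2 := by
    rw [hC2_def, hG_def]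
    have h1 : 0 ≤ Cβ := by
      rw [hCβ_def]; exact Finset.sum_nonneg fun k _ => abs_nonneg _
    have h2 : 0 ≤ Cls := by
      rw [hCls_def]; exact Finset.sum_nonneg fun k _ => abs_nonneg _
    have h3 : 0 ≤ a * d * D * Bm := by positivity
    positivity
  have hebound : ∀ x : Fin d → ℝ, (∀ k, 0 ≤ x k) → (∀ k, |x k| ≤ Bm) →
      f x - f ls ≤ C2 * ∑ k, |R x k| := by
    intro x hx0 hxb
    -- projection inequality per coordinate
    have hproj : ∀ k : Fin d, (x k - γ * g x k - (x k + R x k)) * (ls k - (x k + R x k)) ≤ 0 := by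
      intro k
      have hRk : x k + R x k = max (x k - γ * g x k) 0 := by rw [hR_def]; simp only []; ring
      rw [hRk]
      rcases le_or_gt 0 (x k - γ * g x k) with hz | hz
      · rw [max_eq_left hz, sub_self, zero_mul]
      · rw [max_eq_right hz.le]
        simp only [sub_zero]
        exact mul_nonpos_of_nonpos_of_nonneg hz.le (hlsnn k)
    have h5 : ∀ k : Fin d, γ * (g x k * (x k - ls k))
        ≤ |R x k| * (γ * |g x k| + |x k - ls k|) := by
      intro k
      have hpr := hproj k
      have e1 : γ * (g x k * (x k - ls k))
          ≤ -(γ * g x k * R x k) - R x k * (x k - ls k) - R x k ^ 2 := by nlinarith [hpr]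
      have e2 : -(γ * g x k * R x k) ≤ γ * |g x k| * |R x k| := by
        have ha1 : |γ * g x k * R x k| = γ * |g x k| * |R x k| := by
          rw [abs_mul, abs_mul, abs_of_pos hγ]
        have ha2 : -(γ * g x k * R x k) ≤ |γ * g x k * R x k| := neg_le_abs _
        linarith
      have e3 : -(R x k * (x k - ls k)) ≤ |R x k| * |x k - ls k| := by
        have ha1 : |R x k * (x k - ls k)| = |R x k| * |x k - ls k| := abs_mul _ _
        have ha2 : -(R x k * (x k - ls k)) ≤ |R x k * (x k - ls k)| := neg_le_abs _
        linarith
      have e4 : -(R x k ^ 2) ≤ 0 := neg_nonpos_of_nonneg (sq_nonneg _)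
      nlinarith [e1, e2, e3, e4]
    -- convexity
    have hconv : f x - f ls ≤ ∑ k, g x k * (x k - ls k) := by
      have h1 := quad_expand M hdsym a β x ls
      have h5' : f ls - f x = (a • (M *ᵥ x) - β) ⬝ᵥ (ls - x)
          + a / 2 * ((ls - x) ⬝ᵥ M *ᵥ (ls - x)) := by rw [hf_def]; exact h1
      rw [hdot_g x ls] at h5'
      have h6 : 0 ≤ (ls - x) ⬝ᵥ M *ᵥ (ls - x) := by
        have h7 := hμle (ls - x)
        have h8 : 0 ≤ ∑ k, (ls - x) k ^ 2 := Finset.sum_nonneg fun k _ => sq_nonneg _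
        nlinarith
      have h9 : ∑ k, g x k * (ls k - x k) = -∑ k, g x k * (x k - ls k) := by
        rw [← Finset.sum_neg_distrib]
        exact Finset.sum_congr rfl fun k _ => by ring
      rw [h9] at h5'
      nlinarith [mul_nonneg (by positivity : (0:ℝ) ≤ a / 2) h6]
    -- combine
    have hsum1 : γ * ∑ k, g x k * (x k - ls k)
        ≤ ∑ k, |R x k| * (γ * |g x k| + |x k - ls k|) := by
      rw [Finset.mul_sum]
      exact Finset.sum_le_sum fun k _ => h5 k
    have hsum2 : ∑ k, |R x k| * (γ * |g x k| + |x k - ls k|)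
        ≤ ∑ k, |R x k| * (γ * C2) := by
      refine Finset.sum_le_sum fun k _ => ?_
      refine mul_le_mul_of_nonneg_left ?_ (abs_nonneg _)
      have hg1 : |g x k| ≤ G := hgbd x hxb k
      have hls1 : |ls k| ≤ Cls := by
        rw [hCls_def]
        exact Finset.single_le_sum (f := fun m => |ls m|) (fun m _ => abs_nonneg _)
          (Finset.mem_univ k)
      have hxls : |x k - ls k| ≤ Bm + Cls := by
        calc |x k - ls k| ≤ |x k| + |ls k| := abs_sub _ _
          _ ≤ Bm + Cls := add_le_add (hxb k) hls1
      have hC2e : γ * C2 = γ * G + (Cls + Bm) := by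
        rw [hC2_def]
        field_simp
      rw [hC2e]
      have := mul_le_mul_of_nonneg_left hg1 hγ.le
      linarith
    have hsum3 : ∑ k, |R x k| * (γ * C2) = γ * (C2 * ∑ k, |R x k|) := by
      rw [← Finset.sum_mul, Finset.sum_mul]
      rw [Finset.mul_sum, Finset.mul_sum]
      exact Finset.sum_congr rfl fun k _ => by ring
    have hfinal : γ * (f x - f ls) ≤ γ * (C2 * ∑ k, |R x k|) := by
      have := mul_le_mul_of_nonneg_left hconv hγ.le
      linarith [hsum1, hsum2, hsum3.le, hsum3.ge]
    exact le_of_mul_le_mul_left hfinal hγ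
  have hRlip : ∀ x y : Fin d → ℝ, ∀ δ : ℝ, 0 ≤ δ → (∀ m, |x m - y m| ≤ δ) →
      ∀ k, |R x k - R y k| ≤ (2 + γ * (a * d * D)) * δ := by
    intro x y δ hδ hxy k
    have hgdiff : |g x k - g y k| ≤ a * d * D * δ := by
      have h1b : (M *ᵥ x) k - (M *ᵥ y) k = ∑ m, M k m * (x m - y m) := by
        simp only [Matrix.mulVec, dotProduct]
        rw [← Finset.sum_sub_distrib]
        exact Finset.sum_congr rfl fun m _ => by ring
      have h1 : g x k - g y k = a * ∑ m, M k m * (x m - y m) := by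
        rw [hg_def]
        simp only []
        rw [show a * (M *ᵥ x) k - β k - (a * (M *ᵥ y) k - β k)
            = a * ((M *ᵥ x) k - (M *ᵥ y) k) from by ring, h1b]
      rw [h1, abs_mul, abs_of_pos ha]
      have h2 : |∑ m, M k m * (x m - y m)| ≤ d * D * δ := by
        calc |∑ m, M k m * (x m - y m)| ≤ ∑ m, |M k m * (x m - y m)| :=
              Finset.abs_sum_le_sum_abs _ _
          _ ≤ ∑ m : Fin d, D * δ := by
              refine Finset.sum_le_sum fun m _ => ?_
              rw [abs_mul]
              refine mul_le_mul ?_ (hxy m) (abs_nonneg _) hDpos.le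
              rw [abs_of_nonneg (hM k m).2]
              exact le_trans (hM k m).1 (hMD k)
          _ = d * D * δ := by
              rw [Finset.sum_const, Finset.card_univ, Fintype.card_fin, nsmul_eq_mul]; ring
      calc a * |∑ m, M k m * (x m - y m)| ≤ a * (d * D * δ) :=
            mul_le_mul_of_nonneg_left h2 ha.le
        _ = a * d * D * δ := by ring
    have hmax : |max (x k - γ * g x k) 0 - max (y k - γ * g y k) 0|
        ≤ |x k - y k| + γ * |g x k - g y k| := by
      calc |max (x k - γ * g x k) 0 - max (y k - γ * g y k) 0|
          ≤ |(x k - γ * g x k) - (y k - γ * g y k)| := abs_max_sub_max_le_abs _ _ _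
        _ = |(x k - y k) - γ * (g x k - g y k)| := by ring_nf
        _ ≤ |x k - y k| + |γ * (g x k - g y k)| := abs_sub _ _
        _ = |x k - y k| + γ * |g x k - g y k| := by rw [abs_mul, abs_of_pos hγ]
    have hRe : R x k - R y k
        = (max (x k - γ * g x k) 0 - max (y k - γ * g y k) 0) - (x k - y k) := by
      rw [hR_def]; ring
    rw [hRe]
    calc |(max (x k - γ * g x k) 0 - max (y k - γ * g y k) 0) - (x k - y k)|
        ≤ |max (x k - γ * g x k) 0 - max (y k - γ * g y k) 0| + |x k - y k| := abs_sub _ _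
      _ ≤ (|x k - y k| + γ * |g x k - g y k|) + |x k - y k| := by linarith
      _ ≤ (δ + γ * (a * d * D * δ)) + δ := by
          have := mul_le_mul_of_nonneg_left hgdiff hγ.le
          linarith [hxy k]
      _ = (2 + γ * (a * d * D)) * δ := by ring
  -- main epsilon claim
  obtain ⟨C3, hC3_def⟩ : ∃ C3 : ℝ, C3 = 3 + γ * (a * d * D) := ⟨_, rfl⟩
  have hC3pos : 0 < C3 := by
    rw [hC3_def]
    have : 0 ≤ γ * (a * d * D) := by positivity
    linarith
  obtain ⟨C2', hC2'_def⟩ : ∃ C2' : ℝ, C2' = C2 + 1 := ⟨_, rfl⟩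
  have hC2'pos : 0 < C2' := by rw [hC2'_def]; linarith [hC2nn]
  have hC2C2' : C2 ≤ C2' := by rw [hC2'_def]; linarith
  have hfmain : ∀ ε : ℝ, 0 < ε → ∃ N, ∀ t, N ≤ t → f (l t) - f ls < ε := by
    intro ε hε
    obtain ⟨δ, hδ_def⟩ : ∃ δ : ℝ, δ = ε / (2 * (C2' * (d * C3))) := ⟨_, rfl⟩
    have hδpos : 0 < δ := by
      rw [hδ_def]
      have : (0:ℝ) < 2 * (C2' * (d * C3)) := by positivity
      positivity
    obtain ⟨N₁, hN₁⟩ := hΔsmall δ hδpos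
    obtain ⟨j, hj, hsw⟩ := hsweep (T + N₁)
    obtain ⟨s, hs_def⟩ : ∃ s : ℕ, s = j * d := ⟨_, rfl⟩
    have hjs : j ≤ s := by rw [hs_def]; exact Nat.le_mul_of_pos_right j hdpos
    have hsT : T ≤ s := by omega
    have hsN₁ : N₁ ≤ s := by omega
    have hsw' : ∀ i : Fin d, h (s + i.val) = i := by
      intro i; rw [hs_def]; exact hsw i
    -- coordinate bookkeeping along the sweep
    have hcoord : ∀ n, n ≤ d → ∀ m : Fin d,
        l (s + n) m = if m.val < n then l (s + m.val + 1) m else l s m := by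
      intro n
      induction n with
      | zero => intro _ m; simp
      | succ n ih =>
        intro hn m
        have hnd : n < d := by omega
        have hhn : h (s + n) = ⟨n, hnd⟩ := hsw' ⟨n, hnd⟩
        rcases eq_or_ne m (⟨n, hnd⟩ : Fin d) with hm | hm
        · rw [hm]
          rw [if_pos (by simp : ((⟨n, hnd⟩ : Fin d)).val < n + 1)]
          rfl
        · have h1 : l (s + n + 1) m = l (s + n) m := hlrec' (s + n) m (by rw [hhn]; exact hm)
          have h2 := ih (by omega) m
          rw [show s + (n + 1) = s + n + 1 from rfl, h1, h2]
          by_cases hmn : m.val < n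
          · rw [if_pos hmn, if_pos (by omega)]
          · have hmn' : ¬ m.val < n + 1 := by
              have : m.val ≠ n := fun hc => hm (Fin.ext hc)
              omega
            rw [if_neg hmn, if_neg hmn']
    have hΔw : ∀ i : Fin d, Δ (s + i.val) = l (s + i.val + 1) i - l (s + i.val) i := by
      intro i
      rw [hΔ_def]
      simp only [hsw' i]
    have hRdelta : ∀ i : Fin d, R (l (s + i.val)) i = Δ (s + i.val) := by
      intro i
      have hu : T ≤ s + i.val := le_trans hsT (Nat.le_add_right _ _)
      have hst := hstep (s + i.val) hu
      rw [hsw' i] at hst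
      rw [hR_def]
      simp only []
      rw [hΔw i, hst]
    have hd2 : ∀ i m : Fin d, |l (s + i.val) m - l s m| ≤ δ := by
      intro i m
      have hc := hcoord i.val (le_of_lt i.isLt) m
      by_cases hmi : m.val < i.val
      · rw [hc, if_pos hmi]
        have hcm := hcoord m.val (le_of_lt m.isLt) m
        rw [if_neg (lt_irrefl _)] at hcm
        have he : l (s + m.val + 1) m - l s m = Δ (s + m.val) := by
          rw [hΔw m, hcm]
        rw [he]
        exact hN₁ (s + m.val) (by omega)
      · rw [hc, if_neg hmi, sub_self, abs_zero]
        exact hδpos.le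
    have hRs : ∀ k : Fin d, |R (l s) k| ≤ C3 * δ := by
      intro k
      have h1 : |R (l s) k - R (l (s + k.val)) k| ≤ (2 + γ * (a * d * D)) * δ := by
        refine hRlip (l s) (l (s + k.val)) δ hδpos.le ?_ k
        intro m
        rw [abs_sub_comm]
        exact hd2 k m
      have h2 : |R (l (s + k.val)) k| ≤ δ := by
        rw [hRdelta k]
        exact hN₁ (s + k.val) (by omega)
      calc |R (l s) k| ≤ |R (l s) k - R (l (s + k.val)) k| + |R (l (s + k.val)) k| := by
            have h9 : |(R (l s) k - R (l (s + k.val)) k) + R (l (s + k.val)) k|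
                ≤ |R (l s) k - R (l (s + k.val)) k| + |R (l (s + k.val)) k| := abs_add_le _ _
            rw [show (R (l s) k - R (l (s + k.val)) k) + R (l (s + k.val)) k = R (l s) k
                from by ring] at h9
            exact h9
        _ ≤ (2 + γ * (a * d * D)) * δ + δ := add_le_add h1 h2
        _ = C3 * δ := by rw [hC3_def]; ring
    have hfs : f (l s) - f ls ≤ ε / 2 := by
      have h1 := hebound (l s) (hlnn s) (habs s hsT)
      have h2 : ∑ k, |R (l s) k| ≤ ∑ k : Fin d, C3 * δ :=
        Finset.sum_le_sum fun k _ => hRs k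
      have h3 : ∑ k : Fin d, C3 * δ = d * (C3 * δ) := by
        rw [Finset.sum_const, Finset.card_univ, Fintype.card_fin, nsmul_eq_mul]
      have h4 : C2 * ∑ k, |R (l s) k| ≤ C2' * (d * (C3 * δ)) := by
        have h5 : 0 ≤ ∑ k, |R (l s) k| := Finset.sum_nonneg fun k _ => abs_nonneg _
        calc C2 * ∑ k, |R (l s) k| ≤ C2' * ∑ k, |R (l s) k| :=
              mul_le_mul_of_nonneg_right hC2C2' h5
          _ ≤ C2' * (d * (C3 * δ)) := by
              rw [← h3]
              exact mul_le_mul_of_nonneg_left h2 hC2'pos.le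
      have h6 : C2' * (d * (C3 * δ)) = ε / 2 := by
        rw [hδ_def]
        field_simp
      linarith
    refine ⟨s, fun t ht => ?_⟩
    have := hmono s t hsT ht
    linarith
  -- conclude
  have hl_tendsto : ∀ k, Tendsto (fun t => l t k) atTop (nhds (ls k)) := by
    intro k
    rw [Metric.tendsto_atTop]
    intro ε hε
    obtain ⟨N, hN⟩ := hfmain (a * μ / 2 * ε ^ 2) (by positivity)
    refine ⟨N, fun t ht => ?_⟩
    have h1 := hgrow (l t) (hlnn t)
    have h2 := hN t ht
    have h3 : (l t k - ls k) ^ 2 ≤ ∑ m, (l t m - ls m) ^ 2 :=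
      Finset.single_le_sum (f := fun m => (l t m - ls m) ^ 2) (fun m _ => sq_nonneg _)
        (Finset.mem_univ k)
    have h4 : (l t k - ls k) ^ 2 < ε ^ 2 := by
      have h5 := mul_le_mul_of_nonneg_left h3 (le_of_lt (by positivity : (0:ℝ) < a * μ / 2))
      have h6 : a * μ / 2 * ((l t k - ls k) ^ 2) < a * μ / 2 * ε ^ 2 := by linarith
      have h7 : (0:ℝ) < a * μ / 2 := by positivity
      exact lt_of_mul_lt_mul_left h6 h7.le
    rw [Real.dist_eq]
    have h8 : |l t k - ls k| = Real.sqrt ((l t k - ls k) ^ 2) := (Real.sqrt_sq_eq_abs _).symm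
    rw [h8, show ε = Real.sqrt (ε ^ 2) from (Real.sqrt_sq hε.le).symm]
    exact Real.sqrt_lt_sqrt (sq_nonneg _) h4
  have hltend : Tendsto l atTop (nhds ls) := tendsto_pi_nhds.2 hl_tendsto
  have hq_tendsto : Tendsto q atTop (nhds qs) := by
    refine tendsto_pi_nhds.2 fun k => ?_
    have h1 : Tendsto (fun t => Real.sin θ * l t k - r k) atTop
        (nhds (Real.sin θ * ls k - r k)) :=
      ((hl_tendsto k).const_mul (Real.sin θ)).sub_const (r k)
    have h2 : qs k = Real.sin θ * ls k - r k := by rw [hqs]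
    rw [h2]
    refine h1.congr' ?_
    filter_upwards [eventually_ge_atTop T] with t ht
    exact (congrFun (hqT t ht) k).symm
  exact hq_tendsto.prodMk_nhds hltend

end DetAux

/-- **Asynchronous convergence.** Let `M` be symmetric positive definite
with `M_{hh} ≥ M_{hk} ≥ 0`, `D = max_h M_{hh}`, `sin θ ≠ 0`, `U_N > 0`, and
`0 < γ < U_N² / (sin²θ · d · D)`. Let `h(t)` be i.i.d. uniform random indices in
`Fin d`, and let `(q(t), λ(t))` evolve from deterministic initial conditions
(`λ(0) ≥ 0`) by the asynchronous dual-ascent update in which at time `t` only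
coordinate `h(t)` is refreshed:
`λ_{h(t)}(t+1) = [λ_{h(t)}(t) + γ(b − v̂_{h(t)}(q(t)))]₊`,
`q_{h(t)}(t+1) = sin θ · λ_{h(t)}(t+1) − r_{h(t)}`, all other coordinates unchanged,
where `v̂(q) = c + (2 sin θ / U_N²) M q`. If `(q*, λ*)` is a fixed point of the
corresponding synchronous iteration, then `(q(t), λ(t)) → (q*, λ*)` almost surely. -/
theorem asynchronous_convergence (d : ℕ) (hd : 1 ≤ d)
    (M : Matrix (Fin d) (Fin d) ℝ) (hpd : M.PosDef)
    (hM : ∀ h k : Fin d, M h k ≤ M h h ∧ 0 ≤ M h k)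
    (D : ℝ) (hD : IsGreatest (Set.range fun h => M h h) D)
    (θ UN b : ℝ) (hθ : Real.sin θ ≠ 0) (hUN : 0 < UN)
    (c r : Fin d → ℝ)
    (γ : ℝ) (hγ : 0 < γ) (hγ2 : γ < UN ^ 2 / (Real.sin θ ^ 2 * d * D))
    (Ω : Type*) [MeasurableSpace Ω] (P : Measure Ω) [IsProbabilityMeasure P]
    (h : ℕ → Ω → Fin d) (hmeas : ∀ t, Measurable (h t))
    (hindep : iIndepFun h P)
    (hunif : ∀ t (a : Fin d), P {ω | h t ω = a} = (d : ENNReal)⁻¹)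
    (q l : ℕ → Ω → Fin d → ℝ)
    (q0 l0 : Fin d → ℝ) (hl0nonneg : ∀ k : Fin d, 0 ≤ l0 k)
    (hq0 : ∀ ω, q 0 ω = q0) (hl0 : ∀ ω, l 0 ω = l0)
    (hlrec : ∀ t ω, l (t + 1) ω (h t ω) =
      max (l t ω (h t ω) +
        γ * (b - (c (h t ω) + 2 * Real.sin θ / UN ^ 2 * (M *ᵥ q t ω) (h t ω)))) 0)
    (hlrec' : ∀ t ω (k : Fin d), k ≠ h t ω → l (t + 1) ω k = l t ω k)
    (hqrec : ∀ t ω, q (t + 1) ω (h t ω) = Real.sin θ * l (t + 1) ω (h t ω) - r (h t ω))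
    (hqrec' : ∀ t ω (k : Fin d), k ≠ h t ω → q (t + 1) ω k = q t ω k)
    (qs ls : Fin d → ℝ)
    (hfixl : ls = fun k => max (ls k + γ * (b - (c k + 2 * Real.sin θ / UN ^ 2 * (M *ᵥ qs) k))) 0)
    (hfixq : qs = Real.sin θ • ls - r) :
    ∀ᵐ ω ∂P, Filter.Tendsto (fun t => (q t ω, l t ω)) Filter.atTop (nhds (qs, ls)) := by
  classical
  have hdpos : 0 < d := hd
  -- target index pattern
  set τ : ℕ → Fin d := fun t => ⟨t % d, Nat.mod_lt _ hdpos⟩ with hτ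
  set E : ℕ → Set Ω := fun t => h t ⁻¹' {τ t} with hE
  have hEmeas : ∀ t, MeasurableSet (E t) := fun t => (hmeas t) (measurableSet_singleton _)
  have hEP : ∀ t, P (E t) = (d : ENNReal)⁻¹ := by
    intro t
    have : E t = {ω | h t ω = τ t} := by ext ω; simp [hE]
    rw [this, hunif]
  have key : ∀ S : Finset ℕ, P (⋂ t ∈ S, E t) = ∏ t ∈ S, P (E t) := by
    intro S
    exact hindep.meas_biInter (fun t _ => ⟨{τ t}, measurableSet_singleton _, rfl⟩)
  set A : ℕ → Set Ω := fun j => ⋂ t ∈ Finset.Ico (j * d) (j * d + d), E t with hA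
  have hAmeas : ∀ j, MeasurableSet (A j) := fun j =>
    MeasurableSet.biInter (Set.to_countable _) (fun t _ => hEmeas t)
  have hAP : ∀ j, P (A j) = (d : ENNReal)⁻¹ ^ d := by
    intro j
    rw [hA, key]
    rw [Finset.prod_congr rfl (fun t _ => hEP t), Finset.prod_const, Nat.card_Ico]
    congr 1; omega
  have hdisj : ∀ (j j' : ℕ), j ≠ j' →
      Disjoint (Finset.Ico (j * d) (j * d + d)) (Finset.Ico (j' * d) (j' * d + d)) := by
    intro j j' hjj'
    apply Finset.disjoint_left.2
    intro t ht ht'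
    simp only [Finset.mem_Ico] at ht ht'
    rcases Nat.lt_or_ge j j' with hlt | hge
    · have : j + 1 ≤ j' := hlt
      nlinarith [Nat.mul_le_mul_right d this]
    · have hlt : j' < j := lt_of_le_of_ne hge (Ne.symm hjj')
      have : j' + 1 ≤ j := hlt
      nlinarith [Nat.mul_le_mul_right d this]
  have hiset : iIndepSet A P := by
    rw [iIndepSet_iff_meas_biInter hAmeas]
    intro J
    have : (⋂ j ∈ J, A j) = ⋂ t ∈ J.biUnion (fun j => Finset.Ico (j * d) (j * d + d)), E t := by
      rw [Finset.set_biInter_biUnion]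
    rw [this, key, Finset.prod_biUnion]
    · exact Finset.prod_congr rfl (fun j _ => (key _).symm)
    · intro j _ j' _ hjj'
      exact hdisj j j' hjj'
  have hsum : (∑' j, P (A j)) = ⊤ := by
    have : ∀ j, P (A j) = (d : ENNReal)⁻¹ ^ d := hAP
    rw [tsum_congr this, ENNReal.tsum_const_eq_top_of_ne_zero]
    apply pow_ne_zero
    simp [ENNReal.inv_ne_zero]
  have hone : P (Filter.limsup A Filter.atTop) = 1 :=
    measure_limsup_eq_one hAmeas hiset hsum
  have hmbl : MeasurableSet (Filter.limsup A Filter.atTop) :=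
    MeasurableSet.measurableSet_limsup hAmeas
  have hae : ∀ᵐ ω ∂P, ω ∈ Filter.limsup A Filter.atTop := by
    rw [MeasureTheory.ae_iff]
    have he : {ω | ¬ ω ∈ Filter.limsup A Filter.atTop} = (Filter.limsup A Filter.atTop)ᶜ := rfl
    rw [he, prob_compl_eq_zero_iff hmbl]
    exact hone
  filter_upwards [hae] with ω hω
  have hsweep : ∀ N, ∃ j ≥ N, ∀ i : Fin d, h (j * d + i.val) ω = i := by
    intro N
    rw [Filter.mem_limsup_iff_frequently_mem] at hω
    obtain ⟨j, hjN, hωj⟩ := Filter.frequently_atTop.1 hω N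
    refine ⟨j, hjN, fun i => ?_⟩
    have hti : j * d + i.val ∈ Finset.Ico (j * d) (j * d + d) := by
      have := i.isLt
      simp only [Finset.mem_Ico]
      omega
    have hmem : ω ∈ E (j * d + i.val) := by
      have h2 := hωj
      rw [hA] at h2
      exact Set.mem_iInter₂.1 h2 _ hti
    have : h (j * d + i.val) ω = τ (j * d + i.val) := hmem
    rw [this, hτ]
    ext
    simp only
    rw [Nat.add_comm, Nat.add_mul_mod_self_right, Nat.mod_eq_of_lt i.isLt]
  exact det_conv d hd M hpd hM D hD θ UN b hθ hUN c r γ hγ hγ2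
    (fun t => h t ω) (fun t => q t ω) (fun t => l t ω)
    (by intro k; show 0 ≤ l 0 ω k; rw [hl0 ω]; exact hl0nonneg k)
    (fun t => hlrec t ω) (fun t k hk => hlrec' t ω k hk)
    (fun t => hqrec t ω) (fun t k hk => hqrec' t ω k hk)
    hsweep qs ls hfixl hfixq
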